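/- Let M ∈ ℝ^{n×n} be symmetric positive semidefinite, B symmetric positive definite, V a B-orthonormal basis of N(M), σ > 0, H = M + σ Σᵢ B vᵢ vᵢᵀ B, and b ∈ ℝⁿ a vector in the range of M. Then q := H^{-1} b satisfies M q = b, and among all solutions x of M x = b, q has the smallest B-norm: q = argmin { ‖x‖_B : M x = b }, where ‖x‖_B² = xᵀBx. -/

import Mathlib

open Matrix

private lemma vecMulVec_mulVec' {n : ℕ} (u v x : Fin n → ℝ) :
    (Matrix.vecMulVec u v).mulVec x = (v ⬝ᵥ x) • u := by
  funext i
  simp [Matrix.mulVec, Matrix.vecMulVec, dotProduct, Finset.mul_sum, mul_comm,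
    mul_left_comm, mul_assoc]

private lemma sum_mulVec' {n r : ℕ} (A : Fin r → Matrix (Fin n) (Fin n) ℝ) (x : Fin n → ℝ) :
    (∑ i, A i).mulVec x = ∑ i, (A i).mulVec x := by
  funext j
  simp only [Matrix.mulVec, dotProduct, Finset.sum_apply, Matrix.sum_apply,
    Finset.sum_mul]
  exact Finset.sum_comm

private lemma dotProduct_sum' {n r : ℕ} (x : Fin n → ℝ) (v : Fin r → (Fin n → ℝ)) :
    x ⬝ᵥ (∑ i, v i) = ∑ i, x ⬝ᵥ v i := by
  simp only [dotProduct, Finset.sum_apply, Finset.mul_sum]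
  exact Finset.sum_comm

private lemma dot_symm {m : ℕ} {A : Matrix (Fin m) (Fin m) ℝ} (hA : A.IsHermitian)
    (x y : Fin m → ℝ) : x ⬝ᵥ A.mulVec y = y ⬝ᵥ A.mulVec x := by
  have hT : Aᵀ = A := by
    ext i j
    simpa using hA.apply i j
  rw [Matrix.dotProduct_mulVec, ← Matrix.mulVec_transpose, hT, dotProduct_comm]

theorem stmt_7 {n r : ℕ}
    (M B : Matrix (Fin n) (Fin n) ℝ) (hM : M.PosSemidef) (hB : B.PosDef)
    (V : Fin r → (Fin n → ℝ))
    (hVorth : ∀ i j, V i ⬝ᵥ B.mulVec (V j) = if i = j then (1 : ℝ) else 0)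
    (hVnull : ∀ x : Fin n → ℝ, M.mulVec x = 0 ↔ x ∈ Submodule.span ℝ (Set.range V))
    (σ : ℝ) (hσ : 0 < σ)
    (H : Matrix (Fin n) (Fin n) ℝ)
    (hH : H = M + σ • ∑ i, Matrix.vecMulVec (B.mulVec (V i)) (B.mulVec (V i)))
    (b : Fin n → ℝ) (hb : ∃ y, M.mulVec y = b)
    (q : Fin n → ℝ) (hq : q = H⁻¹.mulVec b) :
    M.mulVec q = b ∧
    ∀ x : Fin n → ℝ, M.mulVec x = b → q ⬝ᵥ B.mulVec q ≤ x ⬝ᵥ B.mulVec x := by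
  obtain ⟨y, hy⟩ := hb
  have hHmul : ∀ x : Fin n → ℝ, H.mulVec x
      = M.mulVec x + σ • ∑ i, (B.mulVec (V i) ⬝ᵥ x) • B.mulVec (V i) := by
    intro x
    rw [hH, Matrix.add_mulVec, Matrix.smul_mulVec, sum_mulVec']
    congr 1
    congr 1
    exact Finset.sum_congr rfl fun i _ => vecMulVec_mulVec' _ _ x
  have hdot : ∀ x : Fin n → ℝ, x ⬝ᵥ H.mulVec x
      = x ⬝ᵥ M.mulVec x + σ * ∑ i, (B.mulVec (V i) ⬝ᵥ x) ^ 2 := by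
    intro x
    rw [hHmul, dotProduct_add, dotProduct_smul, dotProduct_sum', smul_eq_mul]
    congr 1
    congr 1
    refine Finset.sum_congr rfl fun i _ => ?_
    rw [dotProduct_smul, smul_eq_mul, sq, dotProduct_comm]
  have hspan0 : ∀ x : Fin n → ℝ, x ∈ Submodule.span ℝ (Set.range V) →
      (∀ i, B.mulVec (V i) ⬝ᵥ x = 0) → x = 0 := by
    intro x hx h0
    obtain ⟨c, rfl⟩ := Submodule.mem_span_range_iff_exists_fun ℝ |>.mp hx
    have hc : ∀ j, c j = 0 := by
      intro j
      have h := h0 j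
      rw [dotProduct_sum'] at h
      have hrw : ∀ i, B.mulVec (V j) ⬝ᵥ (c i • V i) = if i = j then c i else 0 := by
        intro i
        rw [dotProduct_smul, smul_eq_mul, dotProduct_comm, hVorth]
        split <;> simp
      simp only [hrw] at h
      simpa using h
    simp [hc]
  -- H is positive definite
  have hHsym : H.IsHermitian := by
    rw [hH]
    refine Matrix.IsHermitian.ext fun i j => ?_
    have hMij : M j i = M i j := by simpa using hM.1.apply i j
    simp only [Matrix.add_apply, Matrix.smul_apply, Matrix.sum_apply, Matrix.vecMulVec_apply,
      star_trivial, smul_eq_mul, hMij]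
    congr 1
    congr 1
    exact Finset.sum_congr rfl fun k _ => mul_comm _ _
  have hHpd : H.PosDef := by
    refine Matrix.PosDef.of_dotProduct_mulVec_pos hHsym fun x hx => ?_
    have hx' : x ⬝ᵥ H.mulVec x = x ⬝ᵥ M.mulVec x + σ * ∑ i, (B.mulVec (V i) ⬝ᵥ x) ^ 2 :=
      hdot x
    simp only [star_trivial]
    rw [hx']
    have h1 : 0 ≤ x ⬝ᵥ M.mulVec x := by simpa using hM.dotProduct_mulVec_nonneg x
    have h2 : 0 ≤ ∑ i, (B.mulVec (V i) ⬝ᵥ x) ^ 2 :=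
      Finset.sum_nonneg fun i _ => sq_nonneg _
    rcases eq_or_lt_of_le h1 with h1' | h1'
    · -- x ⬝ M x = 0, so M x = 0, x in span V
      have hMx : M.mulVec x = 0 := by
        have := hM.dotProduct_mulVec_zero_iff x
        simp only [star_trivial] at this
        exact this.mp h1'.symm
      have hxspan := (hVnull x).mp hMx
      have : ∃ i, B.mulVec (V i) ⬝ᵥ x ≠ 0 := by
        by_contra hno
        push_neg at hno
        exact hx (hspan0 x hxspan hno)
      obtain ⟨i, hi⟩ := this
      have h2' : 0 < ∑ i, (B.mulVec (V i) ⬝ᵥ x) ^ 2 := by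
        refine Finset.sum_pos' (fun j _ => sq_nonneg _) ⟨i, Finset.mem_univ i, ?_⟩
        positivity
      rw [← h1']
      positivity
    · have : 0 ≤ σ * ∑ i, (B.mulVec (V i) ⬝ᵥ x) ^ 2 := by positivity
      linarith
  -- H q = b
  have hHq : H.mulVec q = b := by
    rw [hq, Matrix.mulVec_mulVec, Matrix.mul_nonsing_inv _ (isUnit_iff_ne_zero.mpr hHpd.det_pos.ne'), Matrix.one_mulVec]
  -- M (V j) = 0
  have hMV : ∀ j, M.mulVec (V j) = 0 := fun j =>
    (hVnull (V j)).mpr (Submodule.subset_span ⟨j, rfl⟩)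
  -- the B v_j components of q vanish
  have hBVq : ∀ j, B.mulVec (V j) ⬝ᵥ q = 0 := by
    intro j
    have h1 : V j ⬝ᵥ H.mulVec q = V j ⬝ᵥ b := by rw [hHq]
    rw [hHmul q, dotProduct_add, dotProduct_smul, dotProduct_sum'] at h1
    have h2 : V j ⬝ᵥ M.mulVec q = 0 := by
      rw [dot_symm hM.1, hMV, dotProduct_zero]
    have h3 : ∀ i, V j ⬝ᵥ ((B.mulVec (V i) ⬝ᵥ q) • B.mulVec (V i))
        = if i = j then B.mulVec (V i) ⬝ᵥ q else 0 := by
      intro i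
      rw [dotProduct_smul, smul_eq_mul, hVorth j i]
      by_cases hji : j = i
      · subst hji; simp
      · simp [hji, Ne.symm hji]
    have h4 : V j ⬝ᵥ b = 0 := by
      rw [← hy, dot_symm hM.1, hMV, dotProduct_zero]
    simp only [h2, h3, Finset.sum_ite_eq', Finset.mem_univ, if_true, h4, zero_add,
      smul_eq_mul] at h1
    rcases mul_eq_zero.mp h1 with h | h
    · exact absurd h hσ.ne'
    · exact h
  -- M q = b
  have hMq : M.mulVec q = b := by
    have := hHmul q
    rw [hHq] at this
    have hz : ∑ i, (B.mulVec (V i) ⬝ᵥ q) • B.mulVec (V i) = 0 := by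
      refine Finset.sum_eq_zero fun i _ => ?_
      rw [hBVq i, zero_smul]
    rw [hz, smul_zero, add_zero] at this
    exact this.symm
  refine ⟨hMq, fun x hx => ?_⟩
  -- minimality
  set w := x - q with hw
  have hMw : M.mulVec w = 0 := by
    rw [hw, Matrix.mulVec_sub, hx, hMq, sub_self]
  have hwspan := (hVnull w).mp hMw
  -- q ⬝ B w = 0
  have hqBw : q ⬝ᵥ B.mulVec w = 0 := by
    obtain ⟨c, hc⟩ := Submodule.mem_span_range_iff_exists_fun ℝ |>.mp hwspan
    rw [← hc]
    have hlin : B.mulVec (∑ i, c i • V i) = ∑ i, c i • B.mulVec (V i) := by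
      simp only [← Matrix.mulVecLin_apply, map_sum, _root_.map_smul]
    rw [hlin, dotProduct_sum']
    refine Finset.sum_eq_zero fun i _ => ?_
    rw [dotProduct_smul, smul_eq_mul, dotProduct_comm, hBVq, mul_zero]
  have hwBw : 0 ≤ w ⬝ᵥ B.mulVec w := by simpa using hB.posSemidef.dotProduct_mulVec_nonneg w
  have hxqw : x = q + w := by rw [hw]; abel
  calc q ⬝ᵥ B.mulVec q ≤ q ⬝ᵥ B.mulVec q + w ⬝ᵥ B.mulVec w := by linarith
    _ = x ⬝ᵥ B.mulVec x := by
        have h2 : w ⬝ᵥ B.mulVec q = 0 := by rw [dot_symm hB.1, hqBw]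
        rw [hxqw, Matrix.mulVec_add, dotProduct_add, add_dotProduct, add_dotProduct,
          hqBw, h2]
        ring
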